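/- Let t0 > 0, let φ : [t0,∞) → ℝ be of class C² and ψ : [t0,∞) → ℝ be of class C¹. Assume φ''(t) ≥ 0 for every t ≥ t0, and that there exist positive real numbers φ0 and Ψ0 such that |φ'(t)| ≥ φ0 and |ψ'(t)| ≤ Ψ0/t for every t ≥ t0. Then for every t ≥ t0 one has |∫_{t0}^t cos(φ(s))·sin(ψ(s))/s ds| ≤ (4 + Ψ0)/(φ0·t0). -/

import Mathlib

open Real Set Filter MeasureTheory intervalIntegral

theorem oscillating_integral_bound
    (t0 φ0 Ψ0 : ℝ) (ht0 : 0 < t0) (hφ0 : 0 < φ0) (hΨ0 : 0 < Ψ0)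
    (φ φ' φ'' ψ ψ' : ℝ → ℝ)
    (hφd : ∀ t ∈ Ici t0, HasDerivAt φ (φ' t) t)
    (hφd2 : ∀ t ∈ Ici t0, HasDerivAt φ' (φ'' t) t)
    (hφ''c : ContinuousOn φ'' (Ici t0))
    (hψd : ∀ t ∈ Ici t0, HasDerivAt ψ (ψ' t) t)
    (hψ'c : ContinuousOn ψ' (Ici t0))
    (hconv : ∀ t ∈ Ici t0, 0 ≤ φ'' t)
    (hφ'lb : ∀ t ∈ Ici t0, φ0 ≤ |φ' t|)
    (hψ'ub : ∀ t ∈ Ici t0, |ψ' t| ≤ Ψ0 / t) :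
    ∀ t ∈ Ici t0,
      |∫ s in t0..t, Real.cos (φ s) * Real.sin (ψ s) / s| ≤ (4 + Ψ0) / (φ0 * t0) := by
  intro t ht
  rw [mem_Ici] at ht
  set F1 : ℝ → ℝ := fun s => Real.cos (φ s) * Real.sin (ψ s) / s with hF1def
  set F2 : ℝ → ℝ := fun s =>
    Real.sin (φ s) * (ψ' s * Real.cos (ψ s) / (s * φ' s) - Real.sin (ψ s) / (s^2 * φ' s))
    with hF2def
  set F3 : ℝ → ℝ := fun s =>
    -(Real.sin (φ s) * Real.sin (ψ s) / s) * (φ'' s / (φ' s)^2) with hF3def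
  set G : ℝ → ℝ := fun s => Real.sin (φ s) * (Real.sin (ψ s) / (s * φ' s)) with hGdef
  have hsub : Icc t0 t ⊆ Ici t0 := Icc_subset_Ici_self
  have hne : ∀ s ∈ Ici t0, φ' s ≠ 0 := by
    intro s hs h
    have := hφ'lb s hs
    rw [h, abs_zero] at this; linarith
  have hpos : ∀ s ∈ Ici t0, (0:ℝ) < s := fun s hs => ht0.trans_le hs
  -- continuity
  have hφc : ContinuousOn φ (Ici t0) := fun s hs => (hφd s hs).continuousAt.continuousWithinAt
  have hφ'cont : ContinuousOn φ' (Ici t0) := fun s hs => (hφd2 s hs).continuousAt.continuousWithinAt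
  have hψc : ContinuousOn ψ (Ici t0) := fun s hs => (hψd s hs).continuousAt.continuousWithinAt
  have hsφc : ContinuousOn (fun s => s * φ' s) (Ici t0) := continuousOn_id.mul hφ'cont
  have hsinφ : ContinuousOn (fun s => Real.sin (φ s)) (Ici t0) :=
    Real.continuous_sin.comp_continuousOn hφc
  have hcosφ : ContinuousOn (fun s => Real.cos (φ s)) (Ici t0) :=
    Real.continuous_cos.comp_continuousOn hφc
  have hsinψ : ContinuousOn (fun s => Real.sin (ψ s)) (Ici t0) :=
    Real.continuous_sin.comp_continuousOn hψc
  have hcosψ : ContinuousOn (fun s => Real.cos (ψ s)) (Ici t0) :=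
    Real.continuous_cos.comp_continuousOn hψc
  have hcF1 : ContinuousOn F1 (Ici t0) :=
    (hcosφ.mul hsinψ).div continuousOn_id (fun s hs => (hpos s hs).ne')
  have hcF2 : ContinuousOn F2 (Ici t0) := by
    apply hsinφ.mul
    apply ContinuousOn.sub
    · exact ((hψ'c.mul hcosψ).div hsφc
        (fun s hs => mul_ne_zero (hpos s hs).ne' (hne s hs)))
    · exact hsinψ.div ((continuousOn_id.pow 2).mul hφ'cont)
        (fun s hs => mul_ne_zero (pow_ne_zero 2 (hpos s hs).ne') (hne s hs))
  have hcF3 : ContinuousOn F3 (Ici t0) := by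
    apply ContinuousOn.mul
    · exact ((hsinφ.mul hsinψ).div continuousOn_id (fun s hs => (hpos s hs).ne')).neg
    · exact hφ''c.div (hφ'cont.pow 2) (fun s hs => pow_ne_zero 2 (hne s hs))
  -- derivative of G
  have hG : ∀ s ∈ Icc t0 t, HasDerivAt G (F1 s + F2 s + F3 s) s := by
    intro s hs
    have hsI : s ∈ Ici t0 := hsub hs
    have hs0 : (0:ℝ) < s := hpos s hsI
    have hnes : φ' s ≠ 0 := hne s hsI
    have hd1 : HasDerivAt (fun x => Real.sin (φ x)) (Real.cos (φ s) * φ' s) s :=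
      (Real.hasDerivAt_sin (φ s)).comp s (hφd s hsI)
    have hd2 : HasDerivAt (fun x => Real.sin (ψ x)) (Real.cos (ψ s) * ψ' s) s :=
      (Real.hasDerivAt_sin (ψ s)).comp s (hψd s hsI)
    have hd3 : HasDerivAt (fun x => x * φ' x) (1 * φ' s + s * φ'' s) s :=
      (hasDerivAt_id s).mul (hφd2 s hsI)
    have hmul : s * φ' s ≠ 0 := mul_ne_zero hs0.ne' hnes
    have hd4 : HasDerivAt (fun x => Real.sin (ψ x) / (x * φ' x))
        ((Real.cos (ψ s) * ψ' s * (s * φ' s) - Real.sin (ψ s) * (1 * φ' s + s * φ'' s))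
          / (s * φ' s)^2) s := hd2.div hd3 hmul
    have := hd1.mul hd4
    refine this.congr_deriv ?_
    simp only [hF1def, hF2def, hF3def]
    field_simp
    ring
  -- FTC
  have hintF1 : IntervalIntegrable F1 volume t0 t := by
    apply ContinuousOn.intervalIntegrable; rw [uIcc_of_le ht]; exact hcF1.mono hsub
  have hintF2 : IntervalIntegrable F2 volume t0 t := by
    apply ContinuousOn.intervalIntegrable; rw [uIcc_of_le ht]; exact hcF2.mono hsub
  have hintF3 : IntervalIntegrable F3 volume t0 t := by
    apply ContinuousOn.intervalIntegrable; rw [uIcc_of_le ht]; exact hcF3.mono hsub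
  have hFTC : ∫ s in t0..t, (F1 s + F2 s + F3 s) = G t - G t0 := by
    apply integral_eq_sub_of_hasDerivAt
    · rw [uIcc_of_le ht]; exact hG
    · exact (hintF1.add hintF2).add hintF3
  have hsplit : (∫ s in t0..t, (F1 s + F2 s + F3 s))
      = (∫ s in t0..t, F1 s) + (∫ s in t0..t, F2 s) + (∫ s in t0..t, F3 s) := by
    rw [integral_add (hintF1.add hintF2) hintF3, integral_add hintF1 hintF2]
  have hmain : (∫ s in t0..t, F1 s)
      = (G t - G t0) - (∫ s in t0..t, F2 s) - (∫ s in t0..t, F3 s) := by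
    rw [← hFTC, hsplit]; ring
  -- boundary bound
  have hGb : ∀ s ∈ Ici t0, |G s| ≤ 1 / (φ0 * t0) := by
    intro s hsI
    have hs : t0 ≤ s := hsI
    have hs0 : (0:ℝ) < s := ht0.trans_le hs
    have h1 : φ0 * t0 ≤ |s * φ' s| := by
      rw [abs_mul, abs_of_pos hs0]
      calc φ0 * t0 ≤ |φ' s| * s :=
            mul_le_mul (hφ'lb s hsI) hs ht0.le (abs_nonneg _)
        _ = s * |φ' s| := mul_comm _ _
    simp only [hGdef]
    rw [abs_mul, abs_div]
    calc |Real.sin (φ s)| * (|Real.sin (ψ s)| / |s * φ' s|) ≤ 1 * (1 / (φ0 * t0)) := by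
          apply mul_le_mul (Real.abs_sin_le_one _) _ (by positivity) zero_le_one
          exact div_le_div₀ (by norm_num) (Real.abs_sin_le_one _) (by positivity) h1
      _ = 1 / (φ0 * t0) := one_mul _
  -- bound for ∫ F2
  have hF2ptw : ∀ s ∈ Icc t0 t, |F2 s| ≤ (1 + Ψ0) / (φ0 * s^2) := by
    intro s hsIcc
    have hsI : s ∈ Ici t0 := hsub hsIcc
    have hs : t0 ≤ s := hsI
    have hs0 : (0:ℝ) < s := ht0.trans_le hs
    have hA : |ψ' s * Real.cos (ψ s) / (s * φ' s)| ≤ Ψ0 / (φ0 * s^2) := by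
      rw [abs_div, abs_mul, abs_mul, abs_of_pos hs0]
      have hnum : |ψ' s| * |Real.cos (ψ s)| ≤ Ψ0 / s := by
        calc |ψ' s| * |Real.cos (ψ s)| ≤ (Ψ0 / s) * 1 :=
              mul_le_mul (hψ'ub s hsI) (Real.abs_cos_le_one _) (abs_nonneg _) (by positivity)
          _ = Ψ0 / s := mul_one _
      calc |ψ' s| * |Real.cos (ψ s)| / (s * |φ' s|) ≤ (Ψ0 / s) / (s * φ0) :=
            div_le_div₀ (by positivity) hnum (by positivity)
              (mul_le_mul_of_nonneg_left (hφ'lb s hsI) hs0.le)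
        _ = Ψ0 / (φ0 * s^2) := by rw [div_div]; ring_nf
    have hB : |Real.sin (ψ s) / (s^2 * φ' s)| ≤ 1 / (φ0 * s^2) := by
      rw [abs_div, abs_mul, abs_pow, abs_of_pos hs0]
      apply div_le_div₀ (by norm_num) (Real.abs_sin_le_one _) (by positivity)
      calc φ0 * s^2 = s^2 * φ0 := mul_comm _ _
        _ ≤ s^2 * |φ' s| := mul_le_mul_of_nonneg_left (hφ'lb s hsI) (by positivity)
    simp only [hF2def]
    calc |Real.sin (φ s) * (ψ' s * Real.cos (ψ s) / (s * φ' s) - Real.sin (ψ s) / (s^2 * φ' s))|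
        ≤ 1 * |ψ' s * Real.cos (ψ s) / (s * φ' s) - Real.sin (ψ s) / (s^2 * φ' s)| := by
          rw [abs_mul]
          exact mul_le_mul_of_nonneg_right (Real.abs_sin_le_one _) (abs_nonneg _)
      _ = |ψ' s * Real.cos (ψ s) / (s * φ' s) - Real.sin (ψ s) / (s^2 * φ' s)| := one_mul _
      _ ≤ |ψ' s * Real.cos (ψ s) / (s * φ' s)| + |Real.sin (ψ s) / (s^2 * φ' s)| := abs_sub _ _
      _ ≤ Ψ0 / (φ0 * s^2) + 1 / (φ0 * s^2) := add_le_add hA hB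
      _ = (1 + Ψ0) / (φ0 * s^2) := by ring
  have hintb2 : IntervalIntegrable (fun s => (1 + Ψ0) / (φ0 * s^2)) volume t0 t := by
    apply ContinuousOn.intervalIntegrable
    exact ContinuousOn.div continuousOn_const
      (continuousOn_const.mul (continuousOn_id.pow 2))
      (fun s hs => by
        rw [uIcc_of_le ht] at hs
        have hs0 : (0:ℝ) < s := ht0.trans_le hs.1
        positivity)
  have hb2val : (∫ s in t0..t, (1 + Ψ0) / (φ0 * s^2))
      = (-((1+Ψ0)/φ0) * t⁻¹) - (-((1+Ψ0)/φ0) * t0⁻¹) := by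
    apply integral_eq_sub_of_hasDerivAt
    · intro s hs
      rw [uIcc_of_le ht] at hs
      have hs0 : (0:ℝ) < s := ht0.trans_le hs.1
      have := (hasDerivAt_inv hs0.ne').const_mul (-((1+Ψ0)/φ0))
      refine this.congr_deriv ?_
      field_simp
    · exact hintb2
  have ht' : (0:ℝ) < t := ht0.trans_le ht
  have hb2le : (∫ s in t0..t, (1 + Ψ0) / (φ0 * s^2)) ≤ (1 + Ψ0) / (φ0 * t0) := by
    rw [hb2val]
    have h1 : (0:ℝ) ≤ ((1+Ψ0)/φ0) * t⁻¹ := by positivity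
    have h2 : ((1+Ψ0)/φ0) * t0⁻¹ = (1+Ψ0)/(φ0*t0) := by field_simp
    linarith
  have hb2nonneg : (0:ℝ) ≤ ∫ s in t0..t, (1 + Ψ0) / (φ0 * s^2) := by
    apply intervalIntegral.integral_nonneg ht
    intro s hs
    have hs0 : (0:ℝ) < s := ht0.trans_le hs.1
    positivity
  have hI2 : |∫ s in t0..t, F2 s| ≤ (1 + Ψ0) / (φ0 * t0) := by
    have := intervalIntegral.norm_integral_le_abs_of_norm_le (μ := volume)
      (f := F2) (a := t0) (b := t) (g := fun s => (1 + Ψ0) / (φ0 * s^2))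
      ?_ hintb2
    · rw [Real.norm_eq_abs] at this
      refine this.trans ?_
      rw [abs_of_nonneg hb2nonneg]
      exact hb2le
    · rw [ae_restrict_iff' measurableSet_uIoc]
      apply ae_of_all
      intro s hs
      rw [uIoc_of_le ht] at hs
      rw [Real.norm_eq_abs]
      exact hF2ptw s ⟨hs.1.le, hs.2⟩
  -- bound for ∫ F3
  have hF3ptw : ∀ s ∈ Icc t0 t, |F3 s| ≤ (1/t0) * (φ'' s / (φ' s)^2) := by
    intro s hsIcc
    have hsI : s ∈ Ici t0 := hsub hsIcc
    have hs : t0 ≤ s := hsI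
    have hs0 : (0:ℝ) < s := ht0.trans_le hs
    have hq : 0 ≤ φ'' s / (φ' s)^2 := div_nonneg (hconv s hsI) (by positivity)
    simp only [hF3def]
    rw [abs_mul, abs_neg, abs_of_nonneg hq]
    apply mul_le_mul_of_nonneg_right _ hq
    rw [abs_div, abs_of_pos hs0, abs_mul]
    apply div_le_div₀ (by positivity) _ ht0 hs
    calc |Real.sin (φ s)| * |Real.sin (ψ s)| ≤ 1 * 1 :=
          mul_le_mul (Real.abs_sin_le_one _) (Real.abs_sin_le_one _) (abs_nonneg _) zero_le_one
      _ = 1 := one_mul _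
  have hintb3 : IntervalIntegrable (fun s => (1/t0) * (φ'' s / (φ' s)^2)) volume t0 t := by
    apply ContinuousOn.intervalIntegrable
    rw [uIcc_of_le ht]
    apply ContinuousOn.mul continuousOn_const
    exact ((hφ''c.div (hφ'cont.pow 2) (fun s hs => pow_ne_zero 2 (hne s hs))).mono hsub)
  have hb3val : (∫ s in t0..t, (1/t0) * (φ'' s / (φ' s)^2))
      = (-(1/t0 * (φ' t)⁻¹)) - (-(1/t0 * (φ' t0)⁻¹)) := by
    apply integral_eq_sub_of_hasDerivAt
    · intro s hs
      rw [uIcc_of_le ht] at hs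
      have hsI : s ∈ Ici t0 := hsub hs
      have := (((hφd2 s hsI).inv (hne s hsI)).const_mul (1/t0 : ℝ)).fun_neg
      refine this.congr_deriv ?_
      ring
    · exact hintb3
  have hb3nonneg : (0:ℝ) ≤ ∫ s in t0..t, (1/t0) * (φ'' s / (φ' s)^2) := by
    apply intervalIntegral.integral_nonneg ht
    intro s hs
    have hsI : s ∈ Ici t0 := hsub hs
    have := hconv s hsI
    positivity
  have hkey : (φ' t0)⁻¹ - (φ' t)⁻¹ ≤ φ0⁻¹ := by
    rcases lt_or_gt_of_ne (hne t0 self_mem_Ici) with h0 | h0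
    · have htneg : φ' t < 0 := by
        by_contra h
        push_neg at h
        have h' : 0 < φ' t := lt_of_le_of_ne h (fun e => hne t (mem_Ici.mpr ht) e.symm)
        have h0' : (0:ℝ) ∈ Icc (φ' t0) (φ' t) := ⟨h0.le, h'.le⟩
        obtain ⟨x, hx, hx0⟩ := intermediate_value_Icc ht (hφ'cont.mono hsub) h0'
        exact hne x (hsub hx) hx0
      have h1 : φ0 ≤ -(φ' t) := by
        have := hφ'lb t (mem_Ici.mpr ht)
        rwa [abs_of_neg htneg] at this
      have h2 : (-(φ' t))⁻¹ ≤ φ0⁻¹ := inv_anti₀ hφ0 h1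
      have h3 : (φ' t0)⁻¹ < 0 := inv_lt_zero.mpr h0
      rw [inv_neg] at h2
      linarith
    · have htpos : 0 < φ' t := by
        by_contra h
        push_neg at h
        have h' : φ' t < 0 := lt_of_le_of_ne h (hne t (mem_Ici.mpr ht))
        have h0' : (0:ℝ) ∈ Icc (φ' t) (φ' t0) := ⟨h'.le, h0.le⟩
        obtain ⟨x, hx, hx0⟩ := intermediate_value_Icc' ht (hφ'cont.mono hsub) h0'
        exact hne x (hsub hx) hx0
      have h1 : φ0 ≤ φ' t0 := by
        have := hφ'lb t0 self_mem_Ici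
        rwa [abs_of_pos h0] at this
      have h2 : (φ' t0)⁻¹ ≤ φ0⁻¹ := inv_anti₀ hφ0 h1
      have h3 : 0 < (φ' t)⁻¹ := inv_pos.mpr htpos
      linarith
  have hb3le : (∫ s in t0..t, (1/t0) * (φ'' s / (φ' s)^2)) ≤ 1 / (φ0 * t0) := by
    rw [hb3val]
    have ht0' : (0:ℝ) < 1/t0 := by positivity
    calc (-(1/t0 * (φ' t)⁻¹)) - (-(1/t0 * (φ' t0)⁻¹))
        = (1/t0) * ((φ' t0)⁻¹ - (φ' t)⁻¹) := by ring
      _ ≤ (1/t0) * φ0⁻¹ := mul_le_mul_of_nonneg_left hkey ht0'.le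
      _ = 1 / (φ0 * t0) := by rw [one_div, one_div, ← mul_inv, mul_comm]
  have hI3 : |∫ s in t0..t, F3 s| ≤ 1 / (φ0 * t0) := by
    have := intervalIntegral.norm_integral_le_abs_of_norm_le (μ := volume)
      (f := F3) (a := t0) (b := t) (g := fun s => (1/t0) * (φ'' s / (φ' s)^2))
      ?_ hintb3
    · rw [Real.norm_eq_abs] at this
      refine this.trans ?_
      rw [abs_of_nonneg hb3nonneg]
      exact hb3le
    · rw [ae_restrict_iff' measurableSet_uIoc]
      apply ae_of_all
      intro s hs
      rw [uIoc_of_le ht] at hs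
      rw [Real.norm_eq_abs]
      exact hF3ptw s ⟨hs.1.le, hs.2⟩
  -- assemble
  have htri : ∀ a b : ℝ, |a - b| ≤ |a| + |b| := fun a b => abs_sub a b
  have hfinal : |∫ s in t0..t, F1 s|
      ≤ 1/(φ0*t0) + 1/(φ0*t0) + (1+Ψ0)/(φ0*t0) + 1/(φ0*t0) := by
    rw [hmain]
    calc |G t - G t0 - (∫ s in t0..t, F2 s) - (∫ s in t0..t, F3 s)|
        ≤ |G t - G t0 - (∫ s in t0..t, F2 s)| + |∫ s in t0..t, F3 s| := htri _ _
      _ ≤ (|G t - G t0| + |∫ s in t0..t, F2 s|) + |∫ s in t0..t, F3 s| :=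
          add_le_add_left (htri _ _) _
      _ ≤ ((|G t| + |G t0|) + |∫ s in t0..t, F2 s|) + |∫ s in t0..t, F3 s| :=
          add_le_add_left (add_le_add_left (htri _ _) _) _
      _ ≤ ((1/(φ0*t0) + 1/(φ0*t0)) + (1+Ψ0)/(φ0*t0)) + 1/(φ0*t0) :=
          add_le_add (add_le_add (add_le_add (hGb t (mem_Ici.mpr ht))
            (hGb t0 self_mem_Ici)) hI2) hI3
      _ = 1/(φ0*t0) + 1/(φ0*t0) + (1+Ψ0)/(φ0*t0) + 1/(φ0*t0) := by ring
  have heq : 1/(φ0*t0) + 1/(φ0*t0) + (1+Ψ0)/(φ0*t0) + 1/(φ0*t0) = (4 + Ψ0)/(φ0*t0) := by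
    rw [← add_div, ← add_div, ← add_div]
    ring_nf
  rw [heq] at hfinal
  exact hfinal
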